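/- If m ≥ 2^{n-1} - 1, then RBM_{n,m} = P({0,1}^n); that is, an RBM with n visible units and at least 2^{n-1} - 1 hidden units is a universal approximator: every probability distribution on {0,1}^n can be approximated arbitrarily well by visible distributions of the RBM. -/

import Mathlib

open scoped BigOperators

noncomputable section

/-- The real value of a Boolean. -/
def bval (b : Bool) : ℝ := if b then 1 else 0

/-- `p` is a probability distribution on the finite set `X`. -/
def IsProb {X : Type*} [Fintype X] (p : X → ℝ) : Prop :=
  (∀ x, 0 ≤ p x) ∧ ∑ x, p x = 1

/-- One term of the Kullback-Leibler divergence (base-2 logarithm); terms with `a = 0` are `0`. -/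
noncomputable def klTerm (a b : ℝ) : ℝ := if a = 0 then 0 else a * Real.logb 2 (a / b)

/-- Kullback-Leibler divergence with base-2 logarithm; it is `⊤ = ∞` if the support of `q`
does not contain the support of `p`. -/
noncomputable def KL {X : Type*} [Fintype X] (p q : X → ℝ) : EReal :=
  if ∀ x, p x ≠ 0 → q x ≠ 0 then ((∑ x, klTerm (p x) (q x) : ℝ) : EReal) else ⊤

/-- The divergence from `p` to a set `M` of distributions: `inf_{q ∈ M} D(p‖q)`. -/
noncomputable def KLset {X : Type*} [Fintype X] (p : X → ℝ) (M : Set (X → ℝ)) : EReal :=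
  ⨅ q ∈ M, KL p q

/-- The visible distribution `p_{W,C,B}` of an RBM with `n` visible and `m` hidden units. -/
noncomputable def rbmDist (n m : ℕ) (W : Matrix (Fin m) (Fin n) ℝ) (C : Fin m → ℝ)
    (B : Fin n → ℝ) : (Fin n → Bool) → ℝ := fun v =>
  (∑ h : Fin m → Bool,
      Real.exp ((∑ j, ∑ i, bval (h j) * W j i * bval (v i)) +
        (∑ j, C j * bval (h j)) + (∑ i, B i * bval (v i)))) /
  (∑ v' : Fin n → Bool, ∑ h : Fin m → Bool,
      Real.exp ((∑ j, ∑ i, bval (h j) * W j i * bval (v' i)) +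
        (∑ j, C j * bval (h j)) + (∑ i, B i * bval (v' i))))

/-- The RBM model `RBM_{n,m}`: the closure (in `ℝ^{{0,1}^n}`) of the set of visible
distributions representable with some choice of the parameters. -/
noncomputable def RBM (n m : ℕ) : Set ((Fin n → Bool) → ℝ) :=
  closure { p | ∃ (W : Matrix (Fin m) (Fin n) ℝ) (C : Fin m → ℝ) (B : Fin n → ℝ),
    p = rbmDist n m W C B }

/-- `p` is a product distribution on `{0,1}^n`. -/
def IsProductDist {n : ℕ} (p : (Fin n → Bool) → ℝ) : Prop :=
  ∃ f : Fin n → Bool → ℝ, (∀ i, IsProb (f i)) ∧ ∀ v, p v = ∏ i, f i (v i)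

/-- A face (cubical subset) of the `n`-cube: the coordinates outside `I` are fixed to `u`. -/
def IsFace {n : ℕ} (F : Set (Fin n → Bool)) : Prop :=
  ∃ (I : Finset (Fin n)) (u : Fin n → Bool), F = {x | ∀ i ∉ I, x i = u i}

/-- An edge of the `n`-cube: a pair of vectors differing in exactly one entry. -/
def IsEdge {n : ℕ} (E : Set (Fin n → Bool)) : Prop :=
  ∃ (x : Fin n → Bool) (i : Fin n), E = {x, Function.update x i (!x i)}

/-- unnormalized visible weight -/
noncomputable def rbmQ (n m : ℕ) (W : Matrix (Fin m) (Fin n) ℝ) (C : Fin m → ℝ)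
    (B : Fin n → ℝ) (v : Fin n → Bool) : ℝ :=
  Real.exp (∑ i, B i * bval (v i)) *
    ∏ j, (1 + Real.exp ((∑ i, W j i * bval (v i)) + C j))

lemma rbm_numer_eq (n m : ℕ) (W : Matrix (Fin m) (Fin n) ℝ) (C : Fin m → ℝ)
    (B : Fin n → ℝ) (v : Fin n → Bool) :
    (∑ h : Fin m → Bool,
      Real.exp ((∑ j, ∑ i, bval (h j) * W j i * bval (v i)) +
        (∑ j, C j * bval (h j)) + (∑ i, B i * bval (v i)))) = rbmQ n m W C B v := by
  have key : ∀ h : Fin m → Bool,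
      Real.exp ((∑ j, ∑ i, bval (h j) * W j i * bval (v i)) +
        (∑ j, C j * bval (h j)) + (∑ i, B i * bval (v i)))
      = Real.exp (∑ i, B i * bval (v i)) *
        ∏ j, Real.exp (bval (h j) * ((∑ i, W j i * bval (v i)) + C j)) := by
    intro h
    rw [← Real.exp_sum, ← Real.exp_add]
    congr 1
    simp only [mul_add, Finset.mul_sum, Finset.sum_add_distrib]
    ring_nf
    rw [add_right_comm]
    congr 1
    exact Finset.sum_congr rfl fun j _ => mul_comm _ _
  rw [Finset.sum_congr rfl (fun h _ => key h), ← Finset.mul_sum, rbmQ]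
  congr 1
  have := (Fintype.prod_sum (κ := fun _ : Fin m => Bool)
      (f := fun j b => Real.exp (bval b * ((∑ i, W j i * bval (v i)) + C j)))).symm
  rw [this]
  apply Finset.prod_congr rfl
  intro j _
  rw [Fintype.sum_bool]
  simp [bval]
  ring

lemma rbmDist_eq (n m : ℕ) (W : Matrix (Fin m) (Fin n) ℝ) (C : Fin m → ℝ)
    (B : Fin n → ℝ) (v : Fin n → Bool) :
    rbmDist n m W C B v = rbmQ n m W C B v / ∑ v', rbmQ n m W C B v' := by
  rw [rbmDist, ← rbm_numer_eq]
  congr 1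
  exact Finset.sum_congr rfl fun v' _ => rbm_numer_eq n m W C B v'

lemma rbmQ_pos (n m : ℕ) (W : Matrix (Fin m) (Fin n) ℝ) (C : Fin m → ℝ)
    (B : Fin n → ℝ) (v : Fin n → Bool) : 0 < rbmQ n m W C B v := by
  apply mul_pos (Real.exp_pos _)
  exact Finset.prod_pos fun j _ => by positivity

lemma rbmQ_sum_pos (n m : ℕ) (W : Matrix (Fin m) (Fin n) ℝ) (C : Fin m → ℝ)
    (B : Fin n → ℝ) : 0 < ∑ v', rbmQ n m W C B v' :=
  Finset.sum_pos (fun v _ => rbmQ_pos n m W C B v) Finset.univ_nonempty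


lemma rbmDist_isProb (n m : ℕ) (W : Matrix (Fin m) (Fin n) ℝ) (C : Fin m → ℝ)
    (B : Fin n → ℝ) : IsProb (rbmDist n m W C B) := by
  constructor
  · intro v
    rw [rbmDist_eq]
    exact div_nonneg (rbmQ_pos n m W C B v).le (rbmQ_sum_pos n m W C B).le
  · rw [Finset.sum_congr rfl fun v _ => rbmDist_eq n m W C B v, ← Finset.sum_div]
    exact div_self (rbmQ_sum_pos n m W C B).ne'

lemma isClosed_isProb {X : Type*} [Fintype X] : IsClosed {p : X → ℝ | IsProb p} := by
  have : {p : X → ℝ | IsProb p} =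
      (⋂ x : X, {p : X → ℝ | 0 ≤ p x}) ∩ {p : X → ℝ | ∑ x, p x = 1} := by
    ext p; simp [IsProb, Set.mem_iInter, forall_and]
  rw [this]
  apply IsClosed.inter
  · exact isClosed_iInter fun x => isClosed_le continuous_const (continuous_apply x)
  · exact isClosed_eq (by continuity) continuous_const


def zv (n : ℕ) : Fin (n+1) → Bool := fun _ => false
abbrev Kt (n : ℕ) := {k : Fin (n+1) → Bool // k 0 = false ∧ k ≠ zv n}

noncomputable def rr (n : ℕ) (v : Fin (n+1) → Bool) : ℝ :=
  ∑ i ∈ Finset.univ.erase 0, bval (v i)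

variable (n : ℕ) (p : (Fin (n+1) → Bool) → ℝ)

noncomputable def Rc : ℝ := 1 + 2 * ∑ v : Fin (n+1) → Bool, |Real.log (p v / p (zv n))|
noncomputable def B0 : ℝ := Real.log (p (Function.update (zv n) 0 true) / p (zv n))
noncomputable def Ac (k : Kt n) (b : Bool) : ℝ :=
  Real.log ((p (Function.update k.1 0 b) / p (zv n)) *
    Real.exp (Rc n p * rr n k.1 - B0 n p * bval b) - 1)
noncomputable def Bc : Fin (n+1) → ℝ := fun i => if i = 0 then B0 n p else -(Rc n p)

lemma bval_nonneg (b : Bool) : 0 ≤ bval b := by cases b <;> simp [bval]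
lemma bval_le_one (b : Bool) : bval b ≤ 1 := by cases b <;> simp [bval]

lemma rr_ge_one (k : Kt n) : 1 ≤ rr n k.1 := by
  obtain ⟨i, hi⟩ := Function.ne_iff.mp k.2.2
  have hit : k.1 i = true := by
    cases h : k.1 i
    · exact absurd h (by simpa [zv, h] using hi)
    · rfl
  have hi0 : i ≠ 0 := by
    intro h; rw [h] at hit; rw [k.2.1] at hit; exact Bool.noConfusion hit
  have : bval (k.1 i) ≤ rr n k.1 := by
    apply Finset.single_le_sum (f := fun i => bval (k.1 i))
    · intro j _; exact bval_nonneg _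
    · exact Finset.mem_erase.mpr ⟨hi0, Finset.mem_univ i⟩
  simpa [hit, bval] using this

lemma key1 (hpos : ∀ v, 0 < p v) (k : Kt n) (b : Bool) :
    (1:ℝ) < (p (Function.update k.1 0 b) / p (zv n)) *
      Real.exp (Rc n p * rr n k.1 - B0 n p * bval b) := by
  set S := ∑ v : Fin n.succ → Bool, |Real.log (p v / p (zv n))| with hS
  have hS0 : 0 ≤ S := Finset.sum_nonneg fun v _ => abs_nonneg _
  have habs : ∀ v, |Real.log (p v / p (zv n))| ≤ S := fun v =>
    Finset.single_le_sum (f := fun v => |Real.log (p v / p (zv n))|)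
      (fun _ _ => abs_nonneg _) (Finset.mem_univ v)
  have hB0 : |B0 n p| ≤ S := habs _
  have hL : |Real.log (p (Function.update k.1 0 b) / p (zv n))| ≤ S := habs _
  have hr : 1 ≤ rr n k.1 := rr_ge_one n k
  have hd : (0:ℝ) < p (Function.update k.1 0 b) / p (zv n) := div_pos (hpos _) (hpos _)
  rw [← Real.exp_log hd, ← Real.exp_add]
  rw [show (1:ℝ) = Real.exp 0 by simp]
  apply Real.exp_lt_exp.mpr
  have hR : Rc n p = 1 + 2 * S := rfl
  have hb0 := bval_nonneg b
  have hb1 := bval_le_one b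
  have h1 : -S ≤ Real.log (p (Function.update k.1 0 b) / p (zv n)) :=
    neg_le_of_abs_le hL
  have h2 : B0 n p * bval b ≤ S := by
    calc B0 n p * bval b ≤ |B0 n p| * bval b := by
          apply mul_le_mul_of_nonneg_right (le_abs_self _) hb0
      _ ≤ S * 1 := by apply mul_le_mul hB0 hb1 hb0 hS0
      _ = S := mul_one S
  have h3 : Rc n p ≤ Rc n p * rr n k.1 := by
    nlinarith [hR, hS0]
  nlinarith [hR, hS0]

lemma key2 (hpos : ∀ v, 0 < p v) (k : Kt n) (b : Bool) :
    1 + Real.exp (Ac n p k b) = (p (Function.update k.1 0 b) / p (zv n)) *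
      Real.exp (Rc n p * rr n k.1 - B0 n p * bval b) := by
  rw [Ac, Real.exp_log (by linarith [key1 n p hpos k b])]
  ring

lemma card_Kt : Fintype.card (Kt n) ≤ 2 ^ n - 1 := by
  classical
  let T := {g : {i : Fin (n+1) // i ≠ 0} → Bool // g ≠ fun _ => false}
  have hφ : Function.Injective (fun k : Kt n =>
      (⟨fun i => k.1 i.1, by
        intro hc
        apply k.2.2
        funext i
        by_cases hi : i = 0
        · rw [hi, k.2.1]; rfl
        · exact congrFun hc ⟨i, hi⟩⟩ : T)) := by
    intro k k' h
    apply Subtype.ext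
    funext i
    by_cases hi : i = 0
    · rw [hi, k.2.1, k'.2.1]
    · exact congrFun (congrArg Subtype.val h) ⟨i, hi⟩
  have h1 : Fintype.card (Kt n) ≤ Fintype.card T := Fintype.card_le_of_injective _ hφ
  have h2 : Fintype.card T = 2 ^ n - 1 := by
    have hc1 : Fintype.card {i : Fin (n+1) // i ≠ 0} = n := by
      have := Fintype.card_subtype_compl (fun i : Fin (n+1) => i = 0)
      simp [Fintype.card_subtype_eq] at this
      simpa using this
    have := Fintype.card_subtype_compl
      (fun g : {i : Fin (n+1) // i ≠ 0} → Bool => g = fun _ => false)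
    simp [Fintype.card_subtype_eq, Fintype.card_fun, hc1] at this
    simpa [T] using this
  omega

variable {m : ℕ} (e : Kt n → Fin m)

noncomputable def Wc (t : ℝ) : Matrix (Fin m) (Fin (n+1)) ℝ :=
  Function.extend e (fun k i => if i = 0 then Ac n p k true - Ac n p k false
    else (if k.1 i then -(2*Real.log t) else 2*Real.log t)) 0

noncomputable def Cc (t : ℝ) : Fin m → ℝ :=
  Function.extend e (fun k => Ac n p k false +
    ∑ i ∈ Finset.univ.erase 0, (if k.1 i then 2*Real.log t else 0)) 0

noncomputable def Htf (t : ℝ) (k : Kt n) (v : Fin (n+1) → Bool) : ℝ :=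
  1 + Real.exp (Ac n p k (v 0)) *
    ∏ i ∈ Finset.univ.erase 0, (if v i = k.1 i then (1:ℝ) else t^2)

noncomputable def Qc (t : ℝ) (v : Fin (n+1) → Bool) : ℝ :=
  Real.exp (∑ i, Bc n p i * bval (v i)) *
    (2 ^ (m - Fintype.card (Kt n)) * ∏ k : Kt n, Htf n p t k v)

lemma step1 (he : Function.Injective e) {t : ℝ} (ht : 0 < t) (k : Kt n)
    (v : Fin (n+1) → Bool) :
    1 + Real.exp ((∑ i, Wc n p e t (e k) i * bval (v i)) + Cc n p e t (e k))
      = Htf n p t k v := by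
  rw [Wc, Cc, he.extend_apply, he.extend_apply]
  have hsum : (∑ i, (if i = 0 then Ac n p k true - Ac n p k false
        else (if k.1 i then -(2*Real.log t) else 2*Real.log t)) * bval (v i))
      + (Ac n p k false + ∑ i ∈ Finset.univ.erase 0, (if k.1 i then 2*Real.log t else 0))
      = Ac n p k (v 0) + ∑ i ∈ Finset.univ.erase 0,
          (if v i = k.1 i then (0:ℝ) else 2*Real.log t) := by
    rw [← Finset.add_sum_erase _ _ (Finset.mem_univ (0 : Fin (n+1)))]
    have e1 : ∑ i ∈ Finset.univ.erase (0 : Fin (n+1)),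
        (if i = 0 then Ac n p k true - Ac n p k false
          else (if k.1 i then -(2*Real.log t) else 2*Real.log t)) * bval (v i)
        = ∑ i ∈ Finset.univ.erase 0,
          (if k.1 i then -(2*Real.log t) else 2*Real.log t) * bval (v i) := by
      apply Finset.sum_congr rfl
      intro i hi
      rw [if_neg (Finset.mem_erase.mp hi).1]
    rw [e1, if_pos rfl]
    have e2 : (Ac n p k true - Ac n p k false) * bval (v 0) + Ac n p k false
        = Ac n p k (v 0) := by
      cases h : v 0 <;> simp [bval] <;> ring
    have e3 : ∑ i ∈ Finset.univ.erase (0 : Fin (n+1)),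
          (if k.1 i then -(2*Real.log t) else 2*Real.log t) * bval (v i)
        + ∑ i ∈ Finset.univ.erase 0, (if k.1 i then 2*Real.log t else 0)
        = ∑ i ∈ Finset.univ.erase 0, (if v i = k.1 i then (0:ℝ) else 2*Real.log t) := by
      rw [← Finset.sum_add_distrib]
      apply Finset.sum_congr rfl
      intro i _
      cases hk : k.1 i <;> cases hv : v i <;> simp [bval] <;> ring
    rw [← e2, ← e3]
    ring
  rw [hsum, Real.exp_add, Real.exp_sum, Htf]
  congr 2
  apply Finset.prod_congr rfl
  intro i _
  split_ifs with h
  · simp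
  · rw [two_mul, Real.exp_add, Real.exp_log ht, sq]

lemma step2 (he : Function.Injective e) {t : ℝ} (ht : 0 < t) (v : Fin (n+1) → Bool) :
    rbmQ (n+1) m (Wc n p e t) (Cc n p e t) (Bc n p) v = Qc (m := m) n p t v := by
  classical
  rw [rbmQ, Qc]
  congr 1
  set s : Finset (Fin m) := Finset.univ.image e with hs
  have hsub : s ⊆ Finset.univ := Finset.subset_univ s
  rw [← Finset.prod_sdiff hsub]
  have h1 : ∏ j ∈ Finset.univ \ s,
      (1 + Real.exp ((∑ i, Wc n p e t j i * bval (v i)) + Cc n p e t j)) =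
      2 ^ (m - Fintype.card (Kt n)) := by
    have hconst : ∀ j ∈ Finset.univ \ s,
        (1 + Real.exp ((∑ i, Wc n p e t j i * bval (v i)) + Cc n p e t j)) = 2 := by
      intro j hj
      have hnr : ¬ ∃ k, e k = j := by
        rintro ⟨k, rfl⟩
        simp [hs, Finset.mem_sdiff] at hj
      rw [Wc, Cc, Function.extend_apply' _ _ _ hnr, Function.extend_apply' _ _ _ hnr]
      simp
      norm_num
    rw [Finset.prod_congr rfl hconst, Finset.prod_const]
    congr 1
    rw [Finset.card_sdiff_of_subset hsub, Finset.card_univ, Fintype.card_fin,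
      Finset.card_image_of_injective _ he, Finset.card_univ]
  have h2 : ∏ j ∈ s,
      (1 + Real.exp ((∑ i, Wc n p e t j i * bval (v i)) + Cc n p e t j)) =
      ∏ k : Kt n, Htf n p t k v := by
    rw [hs, Finset.prod_image (fun k _ k' _ h => he h)]
    exact Finset.prod_congr rfl fun k _ => step1 n p e he ht k v
  rw [h1, h2]

lemma Htf_zero (k : Kt n) (v : Fin (n+1) → Bool) :
    Htf n p 0 k v = if (∀ i ∈ Finset.univ.erase (0:Fin (n+1)), v i = k.1 i)
      then 1 + Real.exp (Ac n p k (v 0)) else 1 := by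
  rw [Htf]
  split_ifs with h
  · rw [Finset.prod_congr rfl (fun i hi => if_pos (h i hi)), Finset.prod_const_one, mul_one]
  · push_neg at h
    obtain ⟨i, hi, hne⟩ := h
    rw [Finset.prod_eq_zero hi (by rw [if_neg hne]; norm_num), mul_zero, add_zero]

lemma Qc_cont (v : Fin (n+1) → Bool) : Continuous (fun t => Qc (m := m) n p t v) := by
  apply Continuous.mul continuous_const
  apply Continuous.mul continuous_const
  apply continuous_finset_prod
  intro k _
  apply Continuous.add continuous_const
  apply Continuous.mul continuous_const
  apply continuous_finset_prod
  intro i _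
  by_cases h : v i = k.1 i
  · simp only [if_pos h]; exact continuous_const
  · simp only [if_neg h]; exact continuous_pow 2

lemma step4 (hpos : ∀ v, 0 < p v) (v : Fin (n+1) → Bool) :
    Qc (m := m) n p 0 v = 2 ^ (m - Fintype.card (Kt n)) * (p v / p (zv n)) := by
  classical
  rw [Qc]
  by_cases hv : ∀ i ∈ Finset.univ.erase (0:Fin (n+1)), v i = false
  · have hprod : ∏ k : Kt n, Htf n p 0 k v = 1 := by
      apply Finset.prod_eq_one
      intro k _
      rw [Htf_zero, if_neg]
      intro hall
      apply k.2.2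
      funext i
      by_cases hi : i = 0
      · rw [hi, k.2.1]; rfl
      · have him : i ∈ Finset.univ.erase (0:Fin (n+1)) :=
          Finset.mem_erase.mpr ⟨hi, Finset.mem_univ i⟩
        rw [← hall i him, hv i him]; rfl
    have hsum : ∑ i, Bc n p i * bval (v i) = B0 n p * bval (v 0) := by
      rw [← Finset.add_sum_erase _ _ (Finset.mem_univ (0 : Fin (n+1)))]
      rw [Finset.sum_eq_zero fun i hi => by
        rw [hv i hi]; simp [bval]]
      rw [Bc, if_pos rfl, add_zero]
    rw [hprod, hsum, mul_one]
    cases h0 : v 0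
    · have hvz : v = zv n := by
        funext i
        by_cases hi : i = 0
        · rw [hi, h0]; rfl
        · exact hv i (Finset.mem_erase.mpr ⟨hi, Finset.mem_univ i⟩)
      rw [hvz]
      simp [bval, div_self (hpos (zv n)).ne']
    · have hvz : v = Function.update (zv n) 0 true := by
        funext i
        by_cases hi : i = 0
        · rw [hi, Function.update_self, h0]
        · rw [Function.update_of_ne hi]
          exact hv i (Finset.mem_erase.mpr ⟨hi, Finset.mem_univ i⟩)
      have hb : bval true = 1 := rfl
      rw [hb, mul_one, B0, Real.exp_log (div_pos (hpos _) (hpos _)), hvz]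
      ring
  · push_neg at hv
    obtain ⟨i₁, hi₁, hvi₁⟩ := hv
    set kv := Function.update v 0 false with hkv
    have hk0 : kv 0 = false := Function.update_self _ _ _
    have hkz : kv ≠ zv n := by
      intro hc
      apply hvi₁
      have h1 : kv i₁ = v i₁ := Function.update_of_ne (Finset.mem_erase.mp hi₁).1 _ _
      rw [← h1, hc]; rfl
    set ks : Kt n := ⟨kv, hk0, hkz⟩ with hks
    have hmatch : ∀ i ∈ Finset.univ.erase (0:Fin (n+1)), v i = kv i := fun i hi =>
      (Function.update_of_ne (Finset.mem_erase.mp hi).1 _ _).symm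
    have hprod : ∏ k : Kt n, Htf n p 0 k v = 1 + Real.exp (Ac n p ks (v 0)) := by
      rw [Finset.prod_eq_single ks]
      · rw [Htf_zero, if_pos hmatch]
      · intro k _ hk
        rw [Htf_zero, if_neg]
        intro hall
        apply hk
        apply Subtype.ext
        funext i
        by_cases hi : i = 0
        · rw [hi, k.2.1]; exact hk0.symm
        · rw [← hall i (Finset.mem_erase.mpr ⟨hi, Finset.mem_univ i⟩),
            hmatch i (Finset.mem_erase.mpr ⟨hi, Finset.mem_univ i⟩)]
      · intro h; exact absurd (Finset.mem_univ ks) h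
    have hupd : Function.update kv 0 (v 0) = v := by
      rw [hkv, Function.update_idem, Function.update_eq_self]
    have hrr : rr n kv = rr n v :=
      Finset.sum_congr rfl fun i hi => by rw [hmatch i hi]
    have hsum : ∑ i, Bc n p i * bval (v i) = B0 n p * bval (v 0) - Rc n p * rr n v := by
      rw [← Finset.add_sum_erase _ _ (Finset.mem_univ (0 : Fin (n+1)))]
      have h1 : ∑ i ∈ Finset.univ.erase (0:Fin (n+1)), Bc n p i * bval (v i)
          = -(Rc n p) * rr n v := by
        rw [rr, Finset.mul_sum]
        apply Finset.sum_congr rfl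
        intro i hi
        rw [Bc, if_neg (Finset.mem_erase.mp hi).1]
      rw [h1, Bc, if_pos rfl]
      ring
    have hkey := key2 n p hpos ks (v 0)
    rw [hprod, hsum]
    have hk1 : ks.1 = kv := rfl
    rw [hkey, hk1, hupd, hrr]
    have hexp : Real.exp (B0 n p * bval (v 0) - Rc n p * rr n v) *
        Real.exp (Rc n p * rr n v - B0 n p * bval (v 0)) = 1 := by
      rw [← Real.exp_add, show (B0 n p * bval (v 0) - Rc n p * rr n v) +
        (Rc n p * rr n v - B0 n p * bval (v 0)) = 0 by ring, Real.exp_zero]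
    linear_combination (2 ^ (m - Fintype.card (Kt n)) * (p v / p (zv n))) * hexp

lemma pos_mem (n m : ℕ) (hm : 2 ^ n - 1 ≤ m) (p : (Fin (n+1) → Bool) → ℝ)
    (hp : IsProb p) (hpos : ∀ v, 0 < p v) : p ∈ RBM (n+1) m := by
  classical
  obtain ⟨e⟩ : Nonempty (Kt n ↪ Fin m) := Function.Embedding.nonempty_of_card_le
    (by rw [Fintype.card_fin]; exact le_trans (card_Kt n) hm)
  have he : Function.Injective (e : Kt n → Fin m) := e.injective
  have hpz : 0 < p (zv n) := hpos (zv n)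
  have hQ0 : ∀ v, Qc (m := m) n p 0 v
      = 2 ^ (m - Fintype.card (Kt n)) * (p v / p (zv n)) := step4 n p hpos
  have hden : ∑ v', Qc (m := m) n p 0 v'
      = 2 ^ (m - Fintype.card (Kt n)) / p (zv n) := by
    rw [Finset.sum_congr rfl (fun v _ => hQ0 v), ← Finset.mul_sum, ← Finset.sum_div,
      hp.2, mul_one_div]
  have hlim : Filter.Tendsto
      (fun t => fun v => Qc (m := m) n p t v / ∑ v', Qc (m := m) n p t v')
      (nhds 0) (nhds p) := by
    rw [tendsto_pi_nhds]
    intro v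
    have h1 := (Qc_cont (m := m) n p v).tendsto 0
    have h2 : Filter.Tendsto (fun t => ∑ v', Qc (m := m) n p t v') (nhds 0)
        (nhds (∑ v', Qc (m := m) n p 0 v')) :=
      tendsto_finset_sum _ fun v' _ => (Qc_cont (m := m) n p v').tendsto 0
    have h3 := h1.div h2 (by rw [hden]; positivity)
    have h4 : Qc (m := m) n p 0 v / ∑ v', Qc (m := m) n p 0 v' = p v := by
      rw [hQ0, hden]
      have h2o : ((2:ℝ)) ^ (m - Fintype.card (Kt n)) ≠ 0 := by positivity
      have hz := hpz.ne'
      field_simp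
    rw [← h4]
    exact h3
  rw [RBM]
  apply mem_closure_of_tendsto (f := fun t =>
    rbmDist (n+1) m (Wc n p e t) (Cc n p e t) (Bc n p)) (b := nhdsWithin 0 (Set.Ioi 0))
  · have heq : ∀ᶠ t in nhdsWithin (0:ℝ) (Set.Ioi 0),
        rbmDist (n+1) m (Wc n p e t) (Cc n p e t) (Bc n p)
        = fun v => Qc (m := m) n p t v / ∑ v', Qc (m := m) n p t v' := by
      filter_upwards [self_mem_nhdsWithin] with t ht
      funext v
      rw [rbmDist_eq, step2 n p e he ht,
        Finset.sum_congr rfl fun v' _ => step2 n p e he ht v']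
    rw [Filter.tendsto_congr' heq]
    exact hlim.mono_left nhdsWithin_le_nhds
  · exact Filter.Eventually.of_forall fun t => ⟨Wc n p e t, Cc n p e t, Bc n p, rfl⟩

/-- If `m ≥ 2^(n-1) - 1`, then `RBM_{n,m}` equals the set of all probability
distributions on `{0,1}^n`: the RBM is a universal approximator. -/
theorem rbm_universal_approximation (n m : ℕ) (hm : 2 ^ (n - 1) - 1 ≤ m) :
    RBM n m = {p : (Fin n → Bool) → ℝ | IsProb p} := by
  classical
  apply Set.Subset.antisymm
  · rw [RBM]
    apply closure_minimal _ isClosed_isProb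
    rintro q ⟨W, C, B, rfl⟩
    exact rbmDist_isProb n m W C B
  · intro p hp
    simp only [Set.mem_setOf_eq] at hp
    cases n with
    | zero =>
      apply subset_closure
      refine ⟨0, 0, 0, funext fun v => ?_⟩
      have huniq : ∀ x : Fin 0 → Bool, x = v := fun x => funext fun i => i.elim0
      have hpv : p v = 1 := by
        rw [← hp.2]
        exact (Fintype.sum_eq_single v fun x hx => absurd (huniq x) hx).symm
      rw [hpv, rbmDist_eq]
      rw [Fintype.sum_eq_single v fun x hx => absurd (huniq x) hx]
      exact (div_self (rbmQ_pos 0 m 0 0 0 v).ne').symm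
    | succ n' =>
      have hm' : 2 ^ n' - 1 ≤ m := by simpa using hm
      set c : ℝ := (Fintype.card (Fin (n'+1) → Bool) : ℝ)⁻¹ with hc
      have hcard : 0 < (Fintype.card (Fin (n'+1) → Bool) : ℝ) := by
        exact_mod_cast Fintype.card_pos
      have hcpos : 0 < c := by rw [hc]; positivity
      have hmem : p ∈ closure (RBM (n'+1) m) := by
        apply mem_closure_of_tendsto (f := fun ε : ℝ => fun v => (1-ε) * p v + ε * c)
          (b := nhdsWithin 0 (Set.Ioi 0))
        · apply Filter.Tendsto.mono_left _ nhdsWithin_le_nhds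
          rw [tendsto_pi_nhds]
          intro v
          have hcont : Continuous (fun ε : ℝ => (1-ε) * p v + ε * c) := by continuity
          have := hcont.tendsto 0
          simpa using this
        · filter_upwards [Ioo_mem_nhdsGT_of_mem
            (Set.mem_Ico.mpr ⟨le_refl (0:ℝ), zero_lt_one⟩)] with ε hε
          obtain ⟨hε0, hε1⟩ := hε
          apply pos_mem n' m hm'
          · constructor
            · intro v
              have := hp.1 v
              show (0:ℝ) ≤ (1 - ε) * p v + ε * c
              nlinarith
            · rw [Finset.sum_add_distrib, ← Finset.mul_sum, hp.2, ← Finset.mul_sum,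
                Finset.sum_const, Finset.card_univ, nsmul_eq_mul, hc]
              field_simp
              ring
          · intro v
            have := hp.1 v
            show (0:ℝ) < (1 - ε) * p v + ε * c
            nlinarith
      rw [RBM, closure_closure] at hmem
      rwa [RBM]
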